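/- A graph G is square-stable if and only if for every maximum stable set S₁ of G and every maximum stable set S₂ of G², the induced subgraph G[S₁ △ S₂] on the symmetric difference has a perfect matching. -/

import Mathlib

open SimpleGraph

attribute [local instance] Classical.propDecidable

variable {V : Type*}

/-- A stable (independent) set: pairwise non-adjacent vertices. -/
def IsStable (G : SimpleGraph V) (S : Finset V) : Prop :=
  ∀ ⦃a⦄, a ∈ S → ∀ ⦃b⦄, b ∈ S → ¬ G.Adj a b

/-- The stability (independence) number α(G). -/
noncomputable def alpha [Fintype V] (G : SimpleGraph V) : ℕ :=
  (Finset.univ.powerset.filter (fun S => IsStable G S)).sup Finset.card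

/-- A maximum stable set, i.e. a member of Ω(G). -/
def IsMaxStable [Fintype V] (G : SimpleGraph V) (S : Finset V) : Prop :=
  IsStable G S ∧ S.card = alpha G

/-- The square G² of a graph: distinct vertices adjacent iff at distance ≤ 2. -/
def square (G : SimpleGraph V) : SimpleGraph V where
  Adj u v := u ≠ v ∧ (G.Adj u v ∨ ∃ w, G.Adj u w ∧ G.Adj w v)
  symm := by
    refine ⟨?_⟩
    rintro u v ⟨h, h2⟩
    refine ⟨h.symm, ?_⟩
    rcases h2 with h2 | ⟨w, hw1, hw2⟩
    · exact Or.inl h2.symm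
    · exact Or.inr ⟨w, hw2.symm, hw1.symm⟩
  loopless := by refine ⟨?_⟩; rintro u ⟨h, _⟩; exact h rfl

/-- G is α-square-stable if α(G) = α(G²). -/
def SquareStable [Fintype V] (G : SimpleGraph V) : Prop :=
  alpha G = alpha (square G)

/-- The maximum matching size μ(G). -/
noncomputable def mu [Fintype V] (G : SimpleGraph V) : ℕ :=
  sSup {n | ∃ M : G.Subgraph, M.IsMatching ∧ M.verts.ncard = 2 * n}

/-- f realizes a matching of A into S: it sends each a ∈ A to a distinct
neighbour in S (so the corresponding edges form a matching ⊆ (A,S) saturating A). -/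
def MatchedInto (G : SimpleGraph V) (A S : Finset V) (f : V → V) : Prop :=
  (∀ a ∈ A, f a ∈ S ∧ G.Adj a (f a)) ∧ ∀ a ∈ A, ∀ b ∈ A, f a = f b → a = b

/-- Well-covered: no isolated vertices, and every maximal stable set is maximum. -/
def WellCovered [Fintype V] (G : SimpleGraph V) : Prop :=
  (∀ v : V, ∃ w, G.Adj v w) ∧
    ∀ S : Finset V, IsStable G S → (∀ T : Finset V, IsStable G T → S ⊆ T → S = T) →
      S.card = alpha G

/-- Very well-covered: well-covered and |V(G)| = 2α(G). -/
def VeryWellCovered [Fintype V] (G : SimpleGraph V) : Prop :=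
  WellCovered G ∧ Fintype.card V = 2 * alpha G

/-- The set of pendant (degree-one) vertices of G. -/
noncomputable def pendants [Fintype V] (G : SimpleGraph V) : Finset V :=
  Finset.univ.filter (fun v => G.degree v = 1)

/-- G has a perfect matching consisting of pendant edges. -/
def HasPendantPerfectMatching [Fintype V] (G : SimpleGraph V) : Prop :=
  ∃ M : G.Subgraph, M.IsPerfectMatching ∧
    ∀ a b : V, M.Adj a b → G.degree a = 1 ∨ G.degree b = 1

/-- The star K_{1,n}: vertex 0 is the center, adjacent to n leaves. -/
def starGraph (n : ℕ) : SimpleGraph (Fin (n + 1)) where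
  Adj u v := u ≠ v ∧ (u = 0 ∨ v = 0)
  symm := by refine ⟨?_⟩; rintro u v ⟨h1, h2⟩; exact ⟨h1.symm, h2.symm⟩
  loopless := by refine ⟨?_⟩; rintro u ⟨h, _⟩; exact h rfl

lemma isStable_of_square {G : SimpleGraph V} {S : Finset V}
    (h : IsStable (square G) S) : IsStable G S := by
  intro a ha b hb hadj
  exact h ha hb ⟨G.ne_of_adj hadj, Or.inl hadj⟩

lemma card_le_alpha [Fintype V] {G : SimpleGraph V} {S : Finset V}
    (h : IsStable G S) : S.card ≤ alpha G := by
  apply Finset.le_sup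
  simp only [Finset.mem_filter, Finset.mem_powerset]
  exact ⟨Finset.subset_univ _, h⟩

lemma exists_maxStable [Fintype V] (G : SimpleGraph V) : ∃ S, IsMaxStable G S := by
  obtain ⟨S, hS, hcard⟩ := Finset.exists_mem_eq_sup
    (Finset.univ.powerset.filter (fun S => IsStable G S))
    ⟨∅, by simp [IsStable]⟩ Finset.card
  simp only [Finset.mem_filter, Finset.mem_powerset] at hS
  exact ⟨S, hS.2, hcard.symm⟩

lemma alpha_square_le [Fintype V] (G : SimpleGraph V) :
    alpha (square G) ≤ alpha G := by
  apply Finset.sup_mono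
  intro S hS
  simp only [Finset.mem_filter, Finset.mem_powerset] at *
  exact ⟨hS.1, isStable_of_square hS.2⟩

/-- G is square-stable iff for all S₁ ∈ Ω(G), S₂ ∈ Ω(G²), the induced subgraph on
S₁ △ S₂ has a perfect matching. -/
theorem stmt9 [Fintype V] [DecidableEq V] (G : SimpleGraph V) :
    SquareStable G ↔
      ∀ S₁ S₂ : Finset V, IsMaxStable G S₁ → IsMaxStable (square G) S₂ →
        ∃ M : G.Subgraph, M.IsMatching ∧ M.verts = ↑((S₁ \ S₂) ∪ (S₂ \ S₁)) := by
  constructor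
  · intro hsq S₁ S₂ hS₁ hS₂
    set A := S₁ \ S₂ with hA
    set B := S₂ \ S₁ with hB
    have hS₂G : IsStable G S₂ := isStable_of_square hS₂.1
    have hcard : S₁.card = S₂.card := by rw [hS₁.2, hS₂.2, hsq]
    have hABcard : A.card = B.card := by
      have h1 : A.card + (S₁ ∩ S₂).card = S₁.card := Finset.card_sdiff_add_card_inter S₁ S₂
      have h2 : B.card + (S₁ ∩ S₂).card = S₂.card := by
        rw [Finset.inter_comm]; exact Finset.card_sdiff_add_card_inter S₂ S₁
      omega
    have hdisj : ∀ x, x ∈ A → x ∈ B → False := fun x hxA hxB =>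
      (Finset.mem_sdiff.mp hxA).2 (Finset.mem_sdiff.mp hxB).1
    have hE1 : ∀ b ∈ B, ∃ a ∈ A, G.Adj a b := by
      by_contra h
      push_neg at h
      obtain ⟨b, hb, hno⟩ := h
      have hbS₂ : b ∈ S₂ := (Finset.mem_sdiff.mp hb).1
      have hbS₁ : b ∉ S₁ := (Finset.mem_sdiff.mp hb).2
      have hstable : IsStable G (insert b S₁) := by
        intro x hx y hy hadj
        rcases Finset.mem_insert.mp hx with hx1 | hx1 <;>
          rcases Finset.mem_insert.mp hy with hy1 | hy1
        · subst hx1; subst hy1; exact G.loopless.irrefl _ hadj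
        · subst hx1
          by_cases hyS₂ : y ∈ S₂
          · exact hS₂G hbS₂ hyS₂ hadj
          · exact hno y (Finset.mem_sdiff.mpr ⟨hy1, hyS₂⟩) hadj.symm
        · subst hy1
          by_cases hxS₂ : x ∈ S₂
          · exact hS₂G hxS₂ hbS₂ hadj
          · exact hno x (Finset.mem_sdiff.mpr ⟨hx1, hxS₂⟩) hadj
        · exact hS₁.1 hx1 hy1 hadj
      have hle := card_le_alpha hstable
      rw [Finset.card_insert_of_notMem hbS₁, hS₁.2] at hle
      omega
    have hU1 : ∀ a ∈ A, ∀ b₁ ∈ B, ∀ b₂ ∈ B, G.Adj a b₁ → G.Adj a b₂ → b₁ = b₂ := by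
      intro a _ b₁ hb₁ b₂ hb₂ h1 h2
      by_contra hne
      exact hS₂.1 (Finset.mem_sdiff.mp hb₁).1 (Finset.mem_sdiff.mp hb₂).1
        ⟨hne, Or.inr ⟨a, h1.symm, h2⟩⟩
    have hg0 : ∀ b : ↥B, ∃ a : ↥A, G.Adj ↑a ↑b := by
      intro b
      obtain ⟨a, ha, hadj⟩ := hE1 b b.2
      exact ⟨⟨a, ha⟩, hadj⟩
    choose g hg using hg0
    have hginj : Function.Injective g := by
      intro b₁ b₂ heq
      apply Subtype.ext
      exact hU1 (g b₁) (g b₁).2 b₁ b₁.2 b₂ b₂.2 (hg b₁) (by rw [heq]; exact hg b₂)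
    have hgbij : Function.Bijective g :=
      (Fintype.bijective_iff_injective_and_card g).mpr
        ⟨hginj, by simp [hABcard]⟩
    refine ⟨
      { verts := ↑(A ∪ B)
        Adj := fun x y => ∃ b : ↥B, (x = ↑b ∧ y = ↑(g b)) ∨ (y = ↑b ∧ x = ↑(g b))
        adj_sub := ?_
        edge_vert := ?_
        symm := ?_ }, ?_, rfl⟩
    · rintro x y ⟨b, ⟨rfl, rfl⟩ | ⟨rfl, rfl⟩⟩
      · exact (hg b).symm
      · exact hg b
    · rintro x y ⟨b, ⟨rfl, -⟩ | ⟨-, rfl⟩⟩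
      · exact Finset.mem_coe.mpr (Finset.mem_union_right _ b.2)
      · exact Finset.mem_coe.mpr (Finset.mem_union_left _ (g b).2)
    · refine ⟨?_⟩
      rintro x y ⟨b, h | h⟩
      exacts [⟨b, Or.inr h⟩, ⟨b, Or.inl h⟩]
    · intro v hv
      have hv' : v ∈ A ∪ B := hv
      rcases Finset.mem_union.mp hv' with hvA | hvB
      · obtain ⟨b, hb⟩ := hgbij.2 ⟨v, hvA⟩
        refine ⟨↑b, ⟨b, Or.inr ⟨rfl, by rw [hb]⟩⟩, ?_⟩
        rintro w ⟨b', ⟨hw1, hw2⟩ | ⟨hw1, hw2⟩⟩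
        · exact absurd (hw1 ▸ b'.2) (fun hvB => hdisj v hvA hvB)
        · have : g b' = ⟨v, hvA⟩ := Subtype.ext hw2.symm
          rw [hw1, hginj (this.trans hb.symm)]
      · refine ⟨↑(g ⟨v, hvB⟩), ⟨⟨v, hvB⟩, Or.inl ⟨rfl, rfl⟩⟩, ?_⟩
        rintro w ⟨b', ⟨hw1, hw2⟩ | ⟨hw1, hw2⟩⟩
        · have : b' = ⟨v, hvB⟩ := Subtype.ext hw1.symm
          rw [hw2, this]
        · exact absurd (hw2 ▸ (g b').2) (fun hvA => hdisj v hvA hvB)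
  · intro h
    obtain ⟨S₁, hS₁⟩ := exists_maxStable G
    obtain ⟨S₂, hS₂⟩ := exists_maxStable (square G)
    obtain ⟨M, hM, hMv⟩ := h S₁ S₂ hS₁ hS₂
    set A := S₁ \ S₂ with hA
    set B := S₂ \ S₁ with hB
    have hS₂G : IsStable G S₂ := isStable_of_square hS₂.1
    have step : ∀ X Y : Finset V, M.verts = ↑(X ∪ Y) →
        (∀ a ∈ X, ∀ b ∈ X, ¬ G.Adj a b) → X.card ≤ Y.card := by
      intro X Y hv hstab
      have hf : ∀ a ∈ X, ∃ w, M.Adj a w := by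
        intro a ha
        exact (hM (by rw [hv]; exact Finset.mem_coe.mpr (Finset.mem_union_left _ ha))).exists
      choose! f hf using hf
      apply Finset.card_le_card_of_injOn f
      · intro a ha
        have hadj := hf a ha
        have hwmem : f a ∈ M.verts := M.edge_vert (M.adj_symm hadj)
        rw [hv] at hwmem
        rcases Finset.mem_union.mp hwmem with hfa | hfa
        · exact absurd (M.adj_sub hadj) (hstab a ha (f a) hfa)
        · exact hfa
      · intro a₁ h₁ a₂ h₂ heq
        have hu := hM (M.edge_vert (M.adj_symm (hf a₁ h₁)))
        exact hu.unique (M.adj_symm (hf a₁ h₁)) (by rw [heq]; exact M.adj_symm (hf a₂ h₂))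
    have h1 : A.card ≤ B.card := step A B hMv
      (fun a ha b hb => hS₁.1 (Finset.mem_sdiff.mp ha).1 (Finset.mem_sdiff.mp hb).1)
    have h2 : B.card ≤ A.card := step B A (by rw [hMv, Finset.union_comm])
      (fun a ha b hb => hS₂G (Finset.mem_sdiff.mp ha).1 (Finset.mem_sdiff.mp hb).1)
    have hc1 : A.card + (S₁ ∩ S₂).card = S₁.card := Finset.card_sdiff_add_card_inter S₁ S₂
    have hc2 : B.card + (S₁ ∩ S₂).card = S₂.card := by
      rw [Finset.inter_comm]; exact Finset.card_sdiff_add_card_inter S₂ S₁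
    unfold SquareStable
    rw [← hS₁.2, ← hS₂.2]
    omega
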